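/- Let λ, η, y₀ be real numbers with η > 0 and λ² ≠ 1, and set χ = 0. Then the function μ(y) = (1/(λ²−1))·ln((1−λ²)·√η·(y−y₀)), defined on the set of y with (1−λ²)·(y−y₀) > 0, satisfies on that set both (E1): μ″(y) − (1−λ²)·μ′(y)² = (1−λ²)·χ and (E2): μ′(y)² = η·exp(2(1−λ²)·μ(y)) − χ. -/

import Mathlib

/-- for η > 0, λ² ≠ 1 and χ = 0, the function
μ(y) = (1/(λ²−1))·ln((1−λ²)·√η·(y−y₀)) solves both
(E1): μ″ − (1−λ²)(μ′)² = (1−λ²)χ and (E2): (μ′)² = η·e^{2(1−λ²)μ} − χ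
on the set where (1−λ²)(y−y₀) > 0. -/
theorem stmt_11 (lam η y₀ : ℝ) (hη : 0 < η) (hlam : lam ^ 2 ≠ 1)
    (χ : ℝ) (hχ : χ = 0)
    (μ : ℝ → ℝ)
    (hμ : μ = fun y => (1 / (lam ^ 2 - 1)) *
      Real.log ((1 - lam ^ 2) * Real.sqrt η * (y - y₀))) :
    ∀ y : ℝ, (1 - lam ^ 2) * (y - y₀) > 0 →
      (deriv (deriv μ) y - (1 - lam ^ 2) * (deriv μ y) ^ 2 = (1 - lam ^ 2) * χ) ∧
      ((deriv μ y) ^ 2 = η * Real.exp (2 * (1 - lam ^ 2) * μ y) - χ) := by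
  subst hχ hμ
  intro y hy
  have hk0 : (1 : ℝ) - lam ^ 2 ≠ 0 := by
    intro h; apply hlam; linarith
  have hk0' : lam ^ 2 - 1 ≠ 0 := by intro h; apply hlam; linarith
  have hs : 0 < Real.sqrt η := Real.sqrt_pos.mpr hη
  have ha0 : (1 - lam ^ 2) * Real.sqrt η ≠ 0 := mul_ne_zero hk0 hs.ne'
  set c : ℝ := 1 / (lam ^ 2 - 1) with hc
  set S : Set ℝ := {z : ℝ | 0 < (1 - lam ^ 2) * (z - y₀)} with hS
  have hopen : IsOpen S := isOpen_lt continuous_const (by fun_prop)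
  have hmem : S ∈ nhds y := hopen.mem_nhds hy
  -- derivative on S
  have hd : ∀ z ∈ S,
      HasDerivAt (fun y => (1 / (lam ^ 2 - 1)) *
        Real.log ((1 - lam ^ 2) * Real.sqrt η * (y - y₀))) (c * (z - y₀)⁻¹) z := by
    intro z hz
    have hz0 : z - y₀ ≠ 0 := by
      intro h; rw [hS] at hz; simp only [Set.mem_setOf_eq, h, mul_zero] at hz
      exact lt_irrefl 0 hz
    have h1 : HasDerivAt (fun y : ℝ => (1 - lam ^ 2) * Real.sqrt η * (y - y₀))
        ((1 - lam ^ 2) * Real.sqrt η) z := by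
      simpa using ((hasDerivAt_id z).sub_const y₀).const_mul
        ((1 - lam ^ 2) * Real.sqrt η)
    have hA : (1 - lam ^ 2) * Real.sqrt η * (z - y₀) ≠ 0 := mul_ne_zero ha0 hz0
    have h2 := (Real.hasDerivAt_log hA).comp z h1
    have h3 := h2.const_mul (1 / (lam ^ 2 - 1))
    refine h3.congr_deriv ?_
    rw [hc]
    field_simp
  have hz0 : y - y₀ ≠ 0 := by
    intro h; rw [h, mul_zero] at hy; exact lt_irrefl 0 hy
  -- first derivative as a function on S
  have hderiv_eq : ∀ z ∈ S, deriv (fun y => (1 / (lam ^ 2 - 1)) *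
      Real.log ((1 - lam ^ 2) * Real.sqrt η * (y - y₀))) z = c * (z - y₀)⁻¹ :=
    fun z hz => (hd z hz).deriv
  have hev : deriv (fun y => (1 / (lam ^ 2 - 1)) *
      Real.log ((1 - lam ^ 2) * Real.sqrt η * (y - y₀)))
      =ᶠ[nhds y] fun z => c * (z - y₀)⁻¹ :=
    Filter.eventuallyEq_of_mem hmem hderiv_eq
  have hd1 : deriv (fun y => (1 / (lam ^ 2 - 1)) *
      Real.log ((1 - lam ^ 2) * Real.sqrt η * (y - y₀))) y = c * (y - y₀)⁻¹ :=
    hderiv_eq y hy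
  -- second derivative
  have hg : HasDerivAt (fun z : ℝ => c * (z - y₀)⁻¹) (c * (-1 / (y - y₀) ^ 2)) y := by
    have := (((hasDerivAt_id y).sub_const y₀).inv hz0).const_mul c
    simpa using this
  have hd2 : deriv (deriv (fun y => (1 / (lam ^ 2 - 1)) *
      Real.log ((1 - lam ^ 2) * Real.sqrt η * (y - y₀)))) y
      = c * (-1 / (y - y₀) ^ 2) := by
    rw [Filter.EventuallyEq.deriv_eq hev]
    exact hg.deriv
  constructor
  · rw [hd1, hd2, hc]
    field_simp
    ring
  · rw [hd1]
    have hApos : 0 < (1 - lam ^ 2) * Real.sqrt η * (y - y₀) := by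
      have : (1 - lam ^ 2) * Real.sqrt η * (y - y₀)
          = Real.sqrt η * ((1 - lam ^ 2) * (y - y₀)) := by ring
      rw [this]; positivity
    set A : ℝ := (1 - lam ^ 2) * Real.sqrt η * (y - y₀) with hA
    have hexp : 2 * (1 - lam ^ 2) * ((1 / (lam ^ 2 - 1)) * Real.log A)
        = -(2 * Real.log A) := by field_simp; ring
    have hexp2 : Real.exp (-(2 * Real.log A)) = (A ^ 2)⁻¹ := by
      rw [Real.exp_neg]; congr 1
      rw [two_mul, Real.exp_add, Real.exp_log hApos, sq]
    simp only [hexp, hexp2]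
    have hsq : Real.sqrt η ^ 2 = η := Real.sq_sqrt hη.le
    rw [hc]
    have hexp' : 2 * (1 - lam ^ 2) * ((1 / (lam ^ 2 - 1)) *
        Real.log ((1 - lam ^ 2) * Real.sqrt η * (y - y₀))) = -(2 * Real.log A) := hexp
    rw [hexp', hexp2, hA]
    field_simp
    ring_nf
    rw [Real.sq_sqrt hη.le]
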